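/- Let X = {x⁽¹⁾, x⁽²⁾}, let F = {f_1, f_2} with f_1(x) = 1{x = x⁽¹⁾} and f_2(x) = 1{x = x⁽²⁾}, and let D be uniform on {(x⁽¹⁾,1), (x⁽¹⁾,0), (x⁽²⁾,1)}. For a bag (B,α) of size k and f ∈ F, define the proportional log loss ℓ_LOG(f,(B,α)) = −α·log((1/k)·Σ_{j=1}^k f(x_j)) − (1−α)·log(1 − (1/k)·Σ_{j=1}^k f(x_j)), valued in [0,∞]. If the bag size k, number of bags n, and δ ∈ (0,1) satisfy k ≥ 18·log(2n/δ), then with probability at least 1−δ over n i.i.d. bags of size k from D, ℓ_LOG(f_2,(B_i,α_i)) ≥ ℓ_LOG(f_1,(B_i,α_i)) for every i ∈ [n]; consequently every minimizer of the empirical proportional log loss over F equals f_1, which satisfies L(f_1) = L(f_2) + 1/3. -/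

import Mathlib

open MeasureTheory Finset
open scoped ENNReal NNReal

noncomputable section

namespace LLP

/-- Real value of a Boolean label/prediction (`0` or `1`). -/
def bval (b : Bool) : ℝ := if b then 1 else 0

/-- Label proportion `α` of a bag of `k` labeled examples. -/
def labelProp {X : Type*} {k : ℕ} (bag : Fin k → X × Bool) : ℝ :=
  (∑ j, bval (bag j).2) / (k : ℝ)

/-- Average prediction `(1/k)·Σ_j f(x_j)` of `f` on a bag. -/
def predProp {X : Type*} {k : ℕ} (f : X → Bool) (bag : Fin k → X × Bool) : ℝ :=
  (∑ j, bval (f (bag j).1)) / (k : ℝ)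

/-- Instance-level classification loss `L(f) = Pr_{(x,y)∼D}[f(x) ≠ y]`. -/
def err {X : Type*} [MeasurableSpace X] (D : Measure (X × Bool)) (f : X → Bool) : ℝ :=
  (D {p | f p.1 ≠ p.2}).toReal

/-- `S` is shattered by the Boolean-valued class `F`. -/
def Shatters {Z : Type*} (F : Set (Z → Bool)) (S : Finset Z) : Prop :=
  ∀ T ⊆ S, ∃ f ∈ F, ∀ z ∈ S, (f z = true ↔ z ∈ T)

/-- The VC dimension of `F` is at most `d`. -/
def VCDimLE {Z : Type*} (F : Set (Z → Bool)) (d : ℕ) : Prop :=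
  ∀ S : Finset Z, Shatters F S → S.card ≤ d

/-- Joint distribution of `n` i.i.d. bags, each consisting of `k` i.i.d. draws from `D`. -/
def bagMeasure {X : Type*} [MeasurableSpace X] (D : Measure (X × Bool)) (n k : ℕ) :
    Measure (Fin n → Fin k → X × Bool) :=
  Measure.pi fun _ => Measure.pi fun _ => D

/-- Empirical proportional (0-1) risk: fraction of bags whose predicted proportion
mismatches the observed label proportion. -/
def empPM {X : Type*} {n k : ℕ} (f : X → Bool) (ω : Fin n → Fin k → X × Bool) : ℝ :=
  (∑ i, if predProp f (ω i) = labelProp (ω i) then (0 : ℝ) else 1) / (n : ℝ)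

/-- Empirical proportional square loss. -/
def empSQ {X : Type*} {n k : ℕ} (f : X → Bool) (ω : Fin n → Fin k → X × Bool) : ℝ :=
  (∑ i, (predProp f (ω i) - labelProp (ω i)) ^ 2) / (n : ℝ)

/-- The EasyLLP estimate of the 0-1 loss on a single bag, using marginal label
proportion `p`. -/
def ellEZ {X : Type*} {k : ℕ} (p : ℝ) (f : X → Bool) (bag : Fin k → X × Bool) : ℝ :=
  ((k : ℝ) * (labelProp bag - p) + p) * (1 - predProp f bag)
    + ((k : ℝ) * (p - labelProp bag) + (1 - p)) * predProp f bag

/-- Marginal label proportion `p = Pr[y = 1]`. -/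
def labelP {X : Type*} [MeasurableSpace X] (D : Measure (X × Bool)) : ℝ :=
  (D {q | q.2 = true}).toReal

end LLP

namespace LLP

/-- `f_1(x) = 1{x = x⁽¹⁾}` on `X = Fin 2` (`0 = x⁽¹⁾`, `1 = x⁽²⁾`). -/
def f1 : Fin 2 → Bool := fun x => decide (x = 0)

/-- `f_2(x) = 1{x = x⁽²⁾}`. -/
def f2 : Fin 2 → Bool := fun x => decide (x = 1)

/-- The uniform distribution on `{(x⁽¹⁾,1), (x⁽¹⁾,0), (x⁽²⁾,1)}`. -/
def D1 : Measure (Fin 2 × Bool) :=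
  (PMF.uniformOfFinset ({(0, true), (0, false), (1, true)} : Finset (Fin 2 × Bool))
    (by decide)).toMeasure

/-- `[0,∞]`-valued negative logarithm: `−log x` for `x ∈ (0,1]`, and `∞` at `x = 0`. -/
def negLog (x : ℝ) : ℝ≥0∞ := if x = 0 then ⊤ else ENNReal.ofReal (-Real.log x)

/-- The proportional log loss
`ℓ_LOG(f,(B,α)) = −α·log((1/k)Σ_j f(x_j)) − (1−α)·log(1 − (1/k)Σ_j f(x_j))`,
valued in `[0,∞]`. -/
def ellLOG {X : Type*} {k : ℕ} (f : X → Bool) (bag : Fin k → X × Bool) : ℝ≥0∞ :=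
  ENNReal.ofReal (labelProp bag) * negLog (predProp f bag)
    + ENNReal.ofReal (1 - labelProp bag) * negLog (1 - predProp f bag)

def dv (s : Fin 2 × Bool) : ℝ≥0∞ := if s = (1,false) then 0 else 3⁻¹

lemma D1_singleton (s : Fin 2 × Bool) : D1 {s} = dv s := by
  rw [D1, PMF.toMeasure_apply_singleton _ _ (measurableSet_singleton s)]
  rw [PMF.uniformOfFinset_apply]
  fin_cases s <;> simp [dv] <;> decide

abbrev Bag (k : ℕ) := Fin k → Fin 2 × Bool
def muk (k : ℕ) : Measure (Bag k) := Measure.pi fun _ => D1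

instance : SigmaFinite D1 := by unfold D1; infer_instance

lemma muk_singleton {k : ℕ} (bag : Bag k) : muk k {bag} = ∏ j, dv (bag j) := by
  have h : ({bag} : Set (Bag k)) = Set.pi Set.univ (fun j => {bag j}) := by
    ext f; simp [funext_iff, Set.mem_pi]
  rw [muk, h, Measure.pi_pi]
  simp [D1_singleton]

open Classical in
lemma muk_apply {k : ℕ} (S : Set (Bag k)) :
    muk k S = ∑ bag ∈ Finset.univ.filter (· ∈ S), ∏ j, dv (bag j) := by
  classical
  have hS : S = ⋃ bag ∈ Finset.univ.filter (· ∈ S), ({bag} : Set (Bag k)) := by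
    ext f; simp
  conv_lhs => rw [hS]
  rw [measure_biUnion_finset ?_ (fun b _ => measurableSet_singleton b)]
  · exact Finset.sum_congr rfl fun b _ => muk_singleton b
  · intro x _ y _ hxy
    simp [Set.disjoint_singleton, hxy]

def dR (s : Fin 2 × Bool) : ℝ := if s = (1,false) then 0 else 1/3

lemma dv_toReal (s : Fin 2 × Bool) : (dv s).toReal = dR s := by
  rw [dv, dR]; split <;> simp

lemma dv_ne_top (s : Fin 2 × Bool) : dv s ≠ ⊤ := by rw [dv]; split <;> simp

open Classical in
lemma muk_toReal {k : ℕ} (S : Set (Bag k)) :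
    (muk k S).toReal = ∑ bag ∈ Finset.univ.filter (· ∈ S), ∏ j, dR (bag j) := by
  rw [muk_apply, ENNReal.toReal_sum]
  · exact Finset.sum_congr rfl fun b _ => by
      rw [ENNReal.toReal_prod]; exact Finset.prod_congr rfl fun j _ => dv_toReal _
  · intro b _
    exact ENNReal.prod_ne_top (fun j _ => dv_ne_top _) 

lemma dR_nonneg (s : Fin 2 × Bool) : 0 ≤ dR s := by rw [dR]; split <;> norm_num

open Classical in
lemma muk_le_weight {k : ℕ} (S : Set (Bag k)) (g : Fin 2 × Bool → ℝ)
    (hg : ∀ s, 0 ≤ g s)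
    (hb : ∀ bag, bag ∈ S → ∏ j, dR (bag j) ≤ ∏ j, g (bag j)) :
    (muk k S).toReal ≤ (∑ s, g s) ^ k := by
  rw [muk_toReal]
  calc ∑ bag ∈ Finset.univ.filter (· ∈ S), ∏ j, dR (bag j)
      ≤ ∑ bag ∈ Finset.univ.filter (· ∈ S), ∏ j, g (bag j) := by
        apply Finset.sum_le_sum
        intro b hb'
        exact hb b (by simpa using hb')
    _ ≤ ∑ bag : Bag k, ∏ j, g (bag j) := by
        apply Finset.sum_le_sum_of_subset_of_nonneg (Finset.filter_subset _ _)
        intro b _ _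
        exact Finset.prod_nonneg fun j _ => hg _
    _ = (∑ s, g s) ^ k := (Fintype.sum_pow _ _).symm


def cntT {k : ℕ} (bag : Bag k) : ℕ := (Finset.univ.filter fun j => (bag j).2 = true).card
def cntF {k : ℕ} (bag : Bag k) : ℕ := (Finset.univ.filter fun j => (bag j).2 = false).card
def cnt0 {k : ℕ} (bag : Bag k) : ℕ := (Finset.univ.filter fun j => (bag j).1 = 0).card
def cnt1 {k : ℕ} (bag : Bag k) : ℕ := (Finset.univ.filter fun j => (bag j).1 = 1).card

lemma cntT_add_cntF {k : ℕ} (bag : Bag k) : cntT bag + cntF bag = k := by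
  have := Finset.card_filter_add_card_filter_not
    (s := (Finset.univ : Finset (Fin k))) (p := fun j => (bag j).2 = true)
  simpa [cntT, cntF, Bool.not_eq_true] using this

lemma cnt0_add_cnt1 {k : ℕ} (bag : Bag k) : cnt0 bag + cnt1 bag = k := by
  have := Finset.card_filter_add_card_filter_not
    (s := (Finset.univ : Finset (Fin k))) (p := fun j => (bag j).1 = 0)
  have h2 : ∀ x : Fin 2, ¬ (x = 0) ↔ x = 1 := by omega
  simpa [cnt0, cnt1, h2] using this

lemma labelProp_eq {k : ℕ} (bag : Bag k) : labelProp bag = (cntT bag : ℝ) / k := by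
  rw [labelProp, cntT]
  congr 1
  rw [Finset.card_filter]
  push_cast
  exact Finset.sum_congr rfl fun j _ => by by_cases h : (bag j).2 <;> simp [bval, h]

lemma predProp_f1_eq {k : ℕ} (bag : Bag k) : predProp f1 bag = (cnt0 bag : ℝ) / k := by
  rw [predProp, cnt0]
  congr 1
  rw [Finset.card_filter]
  push_cast
  refine Finset.sum_congr rfl fun j _ => ?_
  by_cases h : (bag j).1 = 0 <;> simp [bval, f1, h]

lemma predProp_f2_eq {k : ℕ} (bag : Bag k) : predProp f2 bag = (cnt1 bag : ℝ) / k := by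
  rw [predProp, cnt1]
  congr 1
  rw [Finset.card_filter]
  push_cast
  refine Finset.sum_congr rfl fun j _ => ?_
  by_cases h : (bag j).1 = 1 <;> simp [bval, f2, h]

lemma prod_ite_pow {k : ℕ} (P : Fin k → Prop) [DecidablePred P] (a : ℝ) :
    ∏ j, (if P j then a else 1) = a ^ (Finset.univ.filter P).card := by
  rw [Finset.prod_ite, Finset.prod_const, Finset.prod_const_one, mul_one]

lemma one_le_aux {k c : ℕ} (h : k ≤ 2 * c) : (1:ℝ) ≤ (2/3)^k * (9/4)^c := by
  have h1 : ((2:ℝ)/3)^(2*c) ≤ (2/3)^k := pow_le_pow_of_le_one (by norm_num) (by norm_num) h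
  have h2 : ((2:ℝ)/3)^(2*c) * (9/4)^c = 1 := by
    rw [pow_mul]
    rw [← mul_pow]
    norm_num
  nlinarith [pow_nonneg (show (0:ℝ) ≤ 9/4 by norm_num) c, pow_nonneg (show (0:ℝ) ≤ (2/3)^(2*c) from by positivity) 1]

lemma badS_bound {k : ℕ} :
    (muk k {bag : Bag k | labelProp bag ≤ 1/2}).toReal ≤ (17/18 : ℝ)^k := by
  have := muk_le_weight {bag : Bag k | labelProp bag ≤ 1/2}
    (fun s => dR s * ((2/3) * if s.2 = false then 9/4 else 1))
    (fun s => by have := dR_nonneg s; split <;> nlinarith)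
    ?_
  · convert this using 2
    rw [Fintype.sum_prod_type]
    simp only [Fin.sum_univ_two, Fintype.sum_bool]
    norm_num [dR]
  · intro bag hbag
    -- k ≤ 2 * cntF bag
    have hcnt : k ≤ 2 * cntF bag := by
      rcases Nat.eq_zero_or_pos k with hk | hk
      · omega
      · have h1 : labelProp bag ≤ 1/2 := hbag
        rw [labelProp_eq] at h1
        have hkR : (0:ℝ) < k := by exact_mod_cast hk
        have h2 : (cntT bag : ℝ) ≤ k / 2 := by
          rw [div_le_iff₀ hkR] at h1; linarith
        have h3 : 2 * cntT bag ≤ k := by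
          have : (2 * cntT bag : ℝ) ≤ k := by linarith
          exact_mod_cast this
        have := cntT_add_cntF bag
        omega
    calc ∏ j, dR (bag j) = (∏ j, dR (bag j)) * 1 := by ring
      _ ≤ (∏ j, dR (bag j)) * ((2/3)^k * (9/4)^(cntF bag)) := by
          apply mul_le_mul_of_nonneg_left (one_le_aux hcnt)
          exact Finset.prod_nonneg fun j _ => dR_nonneg _
      _ = ∏ j, dR (bag j) * ((2/3) * if (bag j).2 = false then 9/4 else 1) := by
          rw [Finset.prod_mul_distrib, Finset.prod_mul_distrib, Finset.prod_const,
            prod_ite_pow]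
          rw [cntF, Finset.card_univ, Fintype.card_fin]

lemma badA_bound {k : ℕ} :
    (muk k {bag : Bag k | predProp f1 bag ≤ 1/2}).toReal ≤ (17/18 : ℝ)^k := by
  have := muk_le_weight {bag : Bag k | predProp f1 bag ≤ 1/2}
    (fun s => dR s * ((2/3) * if s.1 = 1 then 9/4 else 1))
    (fun s => by have := dR_nonneg s; split <;> nlinarith)
    ?_
  · convert this using 2
    rw [Fintype.sum_prod_type]
    simp only [Fin.sum_univ_two, Fintype.sum_bool]
    norm_num [dR]
  · intro bag hbag
    have hcnt : k ≤ 2 * cnt1 bag := by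
      rcases Nat.eq_zero_or_pos k with hk | hk
      · omega
      · have h1 : predProp f1 bag ≤ 1/2 := hbag
        rw [predProp_f1_eq] at h1
        have hkR : (0:ℝ) < k := by exact_mod_cast hk
        have h2 : (cnt0 bag : ℝ) ≤ k / 2 := by
          rw [div_le_iff₀ hkR] at h1; linarith
        have h3 : 2 * cnt0 bag ≤ k := by
          have : (2 * cnt0 bag : ℝ) ≤ k := by linarith
          exact_mod_cast this
        have := cnt0_add_cnt1 bag
        omega
    calc ∏ j, dR (bag j) = (∏ j, dR (bag j)) * 1 := by ring
      _ ≤ (∏ j, dR (bag j)) * ((2/3)^k * (9/4)^(cnt1 bag)) := by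
          apply mul_le_mul_of_nonneg_left (one_le_aux hcnt)
          exact Finset.prod_nonneg fun j _ => dR_nonneg _
      _ = ∏ j, dR (bag j) * ((2/3) * if (bag j).1 = 1 then 9/4 else 1) := by
          rw [Finset.prod_mul_distrib, Finset.prod_mul_distrib, Finset.prod_const,
            prod_ite_pow]
          rw [cnt1, Finset.card_univ, Fintype.card_fin]

lemma badC_bound {k : ℕ} :
    (muk k {bag : Bag k | ∀ j, (bag j).1 = 0}).toReal ≤ (2/3 : ℝ)^k := by
  have := muk_le_weight {bag : Bag k | ∀ j, (bag j).1 = 0}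
    (fun s => if s.1 = 0 then dR s else 0)
    (fun s => by have := dR_nonneg s; split <;> nlinarith)
    ?_
  · convert this using 2
    rw [Fintype.sum_prod_type]
    simp only [Fin.sum_univ_two, Fintype.sum_bool]
    norm_num [dR]
  · intro bag hbag
    apply le_of_eq
    exact Finset.prod_congr rfl fun j _ => by rw [if_pos (hbag j)]


instance {k : ℕ} : IsProbabilityMeasure (muk k) := by
  rw [muk]
  have : IsProbabilityMeasure D1 := by rw [D1]; infer_instance
  infer_instance

instance {k : ℕ} : SigmaFinite (muk k) := inferInstance

lemma bagMeasure_eval {n k : ℕ} (i : Fin n) (A : Set (Bag k)) :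
    bagMeasure D1 n k (Function.eval i ⁻¹' A) = muk k A := by
  have hA : MeasurableSet A := A.to_countable.measurableSet
  haveI : IsProbabilityMeasure D1 := by rw [D1]; infer_instance
  haveI : IsProbabilityMeasure (Measure.pi fun _ : Fin k => D1) := inferInstance
  rw [bagMeasure, Set.eval_preimage]
  have : (Measure.pi fun _ : Fin n => Measure.pi fun _ : Fin k => D1)
      (Set.pi Set.univ (Function.update (fun _ => Set.univ) i A))
      = ∏ j, (Measure.pi fun _ : Fin k => D1) (Function.update (fun _ => Set.univ) i A j) := by
    exact Measure.pi_pi _ _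
  rw [this, Finset.prod_eq_single i]
  · rw [Function.update_self, muk]
  · intro j _ hj
    rw [Function.update_of_ne hj]
    exact measure_univ
  · intro h; exact absurd (Finset.mem_univ i) h


lemma bag_lt {k : ℕ} (bag : Bag k)
    (hα : 1/2 < labelProp bag) (hρ : 1/2 < predProp f1 bag) (hx : ∃ j, (bag j).1 = 1) :
    ∃ A B : ℝ, 0 ≤ A ∧ A < B ∧ ellLOG f1 bag = ENNReal.ofReal A ∧
      ellLOG f2 bag = ENNReal.ofReal B := by
  obtain ⟨j0, hj0⟩ := hx
  have hkpos : 0 < k := j0.pos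
  have hkR : (0:ℝ) < k := by exact_mod_cast hkpos
  set α := labelProp bag with hαdef
  set ρ := predProp f1 bag with hρdef
  -- α ≤ 1
  have hα1 : α ≤ 1 := by
    rw [hαdef, labelProp_eq, div_le_one hkR]
    have : cntT bag ≤ k := by
      have := cntT_add_cntF bag; omega
    exact_mod_cast this
  -- ρ < 1
  have hρ1 : ρ < 1 := by
    rw [hρdef, predProp_f1_eq, div_lt_one hkR]
    have hlt : cnt0 bag < k := by
      have hle : cnt0 bag + cnt1 bag = k := cnt0_add_cnt1 bag
      have : 0 < cnt1 bag := by
        apply Finset.card_pos.mpr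
        exact ⟨j0, by simp [hj0]⟩
      omega
    exact_mod_cast hlt
  have hρ0 : 0 < ρ := by linarith
  have h1ρ0 : 0 < 1 - ρ := by linarith
  have h1ρ1 : 1 - ρ < 1 := by linarith
  -- predProp f2 = 1 - ρ
  have hpp : predProp f2 bag = 1 - ρ := by
    rw [predProp_f2_eq, hρdef, predProp_f1_eq]
    have := cnt0_add_cnt1 bag
    field_simp
    have : (cnt1 bag : ℝ) = k - cnt0 bag := by
      have h := cnt0_add_cnt1 bag
      have : ((cnt0 bag : ℝ)) + cnt1 bag = k := by exact_mod_cast h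
      linarith
    linarith [this]
  set u := -Real.log ρ with hu
  set v := -Real.log (1-ρ) with hv
  have huv : u < v := by
    rw [hu, hv]
    have : Real.log (1-ρ) < Real.log ρ := Real.log_lt_log h1ρ0 (by linarith)
    linarith
  have hu0 : 0 ≤ u := by
    rw [hu]
    have := Real.log_nonpos (le_of_lt hρ0) (le_of_lt hρ1)
    linarith
  have hv0 : 0 ≤ v := by
    rw [hv]
    have := Real.log_nonpos (le_of_lt h1ρ0) (le_of_lt h1ρ1)
    linarith
  have hnl1 : negLog ρ = ENNReal.ofReal u := by rw [negLog, if_neg (ne_of_gt hρ0), hu]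
  have hnl2 : negLog (1-ρ) = ENNReal.ofReal v := by rw [negLog, if_neg (ne_of_gt h1ρ0), hv]
  refine ⟨α * u + (1-α) * v, α * v + (1-α) * u, ?_, ?_, ?_, ?_⟩
  · have := mul_nonneg (by linarith : (0:ℝ) ≤ α) hu0
    have := mul_nonneg (by linarith : (0:ℝ) ≤ 1-α) hv0
    linarith
  · nlinarith
  · rw [ellLOG, ← hαdef, ← hρdef, hnl1, hnl2]
    rw [← ENNReal.ofReal_mul (by linarith), ← ENNReal.ofReal_mul (by linarith)]
    rw [← ENNReal.ofReal_add (by nlinarith) (by nlinarith)]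
  · rw [ellLOG, ← hαdef, hpp]
    rw [show (1:ℝ) - (1 - ρ) = ρ from by ring]
    rw [hnl1, hnl2]
    rw [← ENNReal.ofReal_mul (by linarith), ← ENNReal.ofReal_mul (by linarith)]
    rw [← ENNReal.ofReal_add (by nlinarith) (by nlinarith)]

lemma err_aux (f : Fin 2 → Bool) : err D1 f
      = (∑ x : Fin 2 × Bool, if f x.1 ≠ x.2 then
          (PMF.uniformOfFinset ({(0, true), (0, false), (1, true)} : Finset (Fin 2 × Bool))
            (by decide)) x else 0).toReal := by
    rw [err, D1, PMF.toMeasure_apply_fintype]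
    congr 1
    refine Finset.sum_congr rfl fun x _ => ?_
    simp [Set.indicator_apply]

lemma err_f1 : err D1 f1 = 2/3 := by
  rw [err_aux, Fintype.sum_prod_type]
  simp only [Fin.sum_univ_two, Fintype.sum_bool, PMF.uniformOfFinset_apply]
  norm_num [f1, Finset.mem_insert]
  rw [ENNReal.toReal_add (by norm_num) (by norm_num)]
  norm_num

lemma err_f2 : err D1 f2 = 1/3 := by
  rw [err_aux, Fintype.sum_prod_type]
  simp only [Fin.sum_univ_two, Fintype.sum_bool, PMF.uniformOfFinset_apply]
  norm_num [f2, Finset.mem_insert]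

lemma err_eq : err D1 f1 = err D1 f2 + 1 / 3 := by
  rw [err_f1, err_f2]; norm_num

-- exp bound
lemma exp_inv18_le : Real.exp (1/18 : ℝ) ≤ (72/71 : ℝ)^4 := by
  have h1 : Real.exp (-(1/72) : ℝ) ≥ 1 - 1/72 := by
    have := Real.add_one_le_exp (-(1/72) : ℝ); linarith
  have h2 : Real.exp (1/72 : ℝ) ≤ 72/71 := by
    rw [show (1/72 : ℝ) = -(-(1/72)) from by ring, Real.exp_neg]
    rw [show (72/71 : ℝ) = (71/72 : ℝ)⁻¹ from by norm_num]
    apply inv_anti₀ (by norm_num)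
    linarith
  calc Real.exp (1/18 : ℝ) = Real.exp (1/72 : ℝ) ^ (4:ℕ) := by
        rw [← Real.exp_nat_mul]; norm_num
    _ ≤ (72/71 : ℝ)^4 := by
        apply pow_le_pow_left₀ (Real.exp_nonneg _) h2

lemma key_pow (a r : ℝ) (k : ℕ) (hk : 13 ≤ k) (ha : 0 ≤ a) (hr : 0 ≤ r) (hr1 : r ≤ 1)
    (h : a ≤ Real.exp (-(1/18) : ℝ) * r) :
    a ^ k ≤ r ^ 13 * Real.exp (-(k:ℝ)/18) := by
  have hc : Real.exp (-(k:ℝ)/18) = Real.exp (-(1/18) : ℝ) ^ k := by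
    rw [← Real.exp_nat_mul]; congr 1; ring
  calc a^k ≤ (Real.exp (-(1/18) : ℝ) * r)^k := pow_le_pow_left₀ ha h k
    _ = r^k * Real.exp (-(k:ℝ)/18) := by rw [mul_pow, hc]; ring
    _ ≤ r^13 * Real.exp (-(k:ℝ)/18) := by
        apply mul_le_mul_of_nonneg_right _ (Real.exp_nonneg _)
        exact pow_le_pow_of_le_one hr hr1 hk

lemma numeric (k n : ℕ) (δ : ℝ) (hδ0 : 0 < δ) (hδ1 : δ < 1) (hn : 1 ≤ n)
    (hk : 18 * Real.log (2 * (n:ℝ) / δ) ≤ (k:ℝ)) :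
    (n:ℝ) * (2 * (17/18:ℝ)^k + (2/3:ℝ)^k) ≤ δ := by
  have hn1 : (1:ℝ) ≤ (n:ℝ) := by exact_mod_cast hn
  have hq : (2:ℝ) < 2 * n / δ := by
    rw [lt_div_iff₀ hδ0]; nlinarith
  have hk13 : 13 ≤ k := by
    have h2 : Real.log 2 < Real.log (2*n/δ) := Real.log_lt_log (by norm_num) hq
    have := Real.log_two_gt_d9
    have : (12:ℝ) < k := by nlinarith
    have h12 : (12:ℕ) < k := by exact_mod_cast this
    omega
  -- exp bound
  have hexp : (n:ℝ) * Real.exp (-(k:ℝ)/18) ≤ δ/2 := by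
    have hpos : (0:ℝ) < 2*n/δ := lt_trans (by norm_num) hq
    have h1 : Real.log (2*n/δ) ≤ (k:ℝ)/18 := by linarith
    have h2 : 2*n/δ ≤ Real.exp ((k:ℝ)/18) := by
      rw [← Real.exp_log hpos]; exact Real.exp_le_exp.mpr h1
    have h3 : 2*(n:ℝ) ≤ δ * Real.exp ((k:ℝ)/18) := by
      rw [div_le_iff₀ hδ0] at h2; linarith
    have h4 : Real.exp (-(k:ℝ)/18) = (Real.exp ((k:ℝ)/18))⁻¹ := by
      rw [← Real.exp_neg]; ring_nf
    rw [h4, ← div_eq_mul_inv, div_le_iff₀ (Real.exp_pos _)]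
    nlinarith [Real.exp_pos ((k:ℝ)/18)]
  -- per-term bounds
  have hb1 : (17/18:ℝ)^k ≤ (456855552/457410258 : ℝ)^13 * Real.exp (-(k:ℝ)/18) := by
    apply key_pow _ _ _ hk13 (by norm_num) (by norm_num) (by norm_num)
    have := exp_inv18_le
    have he : Real.exp (-(1/18):ℝ) = (Real.exp ((1/18):ℝ))⁻¹ := by
      rw [← Real.exp_neg]
    rw [he]
    rw [show (456855552/457410258 : ℝ) = (17/18) * (72/71)^4 from by norm_num]
    have hp := Real.exp_pos ((1/18):ℝ)
    rw [inv_mul_eq_div, le_div_iff₀ hp]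
    nlinarith
  have hb2 : (2/3:ℝ)^k ≤ (53747712/76235043 : ℝ)^13 * Real.exp (-(k:ℝ)/18) := by
    apply key_pow _ _ _ hk13 (by norm_num) (by norm_num) (by norm_num)
    have := exp_inv18_le
    have he : Real.exp (-(1/18):ℝ) = (Real.exp ((1/18):ℝ))⁻¹ := by
      rw [← Real.exp_neg]
    rw [he]
    rw [show (53747712/76235043 : ℝ) = (2/3) * (72/71)^4 from by norm_num]
    have hp := Real.exp_pos ((1/18):ℝ)
    rw [inv_mul_eq_div, le_div_iff₀ hp]
    nlinarith
  have hnum : 2*(456855552/457410258 : ℝ)^13 + (53747712/76235043 : ℝ)^13 ≤ 2 := by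
    norm_num
  have hE := Real.exp_nonneg (-(k:ℝ)/18)
  calc (n:ℝ) * (2 * (17/18:ℝ)^k + (2/3:ℝ)^k)
      ≤ (n:ℝ) * ((2*(456855552/457410258 : ℝ)^13 + (53747712/76235043 : ℝ)^13) * Real.exp (-(k:ℝ)/18)) := by
        apply mul_le_mul_of_nonneg_left _ (by positivity)
        nlinarith
    _ ≤ (n:ℝ) * (2 * Real.exp (-(k:ℝ)/18)) := by
        apply mul_le_mul_of_nonneg_left _ (by positivity)
        exact mul_le_mul_of_nonneg_right hnum hE
    _ = 2 * ((n:ℝ) * Real.exp (-(k:ℝ)/18)) := by ring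
    _ ≤ 2 * (δ/2) := by linarith
    _ = δ := by ring

/-- failure of the proportional log loss in the agnostic setting.
If `k ≥ 18·log(2n/δ)` with `δ ∈ (0,1)` and `n ≥ 1`, then with probability at least
`1 − δ` over `n` i.i.d. bags of size `k` from `D1`, `ℓ_LOG(f₂,(B_i,α_i)) ≥
ℓ_LOG(f₁,(B_i,α_i))` for every `i`, and every minimizer of the empirical proportional
log loss over `F = {f₁, f₂}` equals `f₁`; moreover `L(f₁) = L(f₂) + 1/3`. -/
theorem prop_log_loss_fails :
    err D1 f1 = err D1 f2 + 1 / 3 ∧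
    ∀ (k n : ℕ) (δ : ℝ), 0 < δ → δ < 1 → 1 ≤ n →
      18 * Real.log (2 * (n : ℝ) / δ) ≤ (k : ℝ) →
      1 - δ ≤
        ((bagMeasure D1 n k)
          {ω | (∀ i, ellLOG f1 (ω i) ≤ ellLOG f2 (ω i)) ∧
            ∀ g ∈ ({f1, f2} : Set (Fin 2 → Bool)),
              (∀ f ∈ ({f1, f2} : Set (Fin 2 → Bool)),
                  ∑ i, ellLOG g (ω i) ≤ ∑ i, ellLOG f (ω i)) →
                g = f1}).toReal := by
  refine ⟨err_eq, ?_⟩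
  intro k n δ hδ0 hδ1 hn hk
  haveI : Nonempty (Fin n) := Fin.pos_iff_nonempty.mp (by omega)
  haveI hD1p : IsProbabilityMeasure D1 := by rw [D1]; infer_instance
  haveI : IsProbabilityMeasure (bagMeasure D1 n k) := by rw [bagMeasure]; infer_instance
  set μ := bagMeasure D1 n k with hμ
  set Good : Set (Bag k) :=
    {bag | 1/2 < labelProp bag ∧ 1/2 < predProp f1 bag ∧ ∃ j, (bag j).1 = 1} with hGood
  set T : Set (Fin n → Bag k) :=
    {ω | (∀ i, ellLOG f1 (ω i) ≤ ellLOG f2 (ω i)) ∧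
      ∀ g ∈ ({f1, f2} : Set (Fin 2 → Bool)),
        (∀ f ∈ ({f1, f2} : Set (Fin 2 → Bool)),
            ∑ i, ellLOG g (ω i) ≤ ∑ i, ellLOG f (ω i)) →
          g = f1} with hT
  set E : Set (Fin n → Bag k) := {ω | ∀ i, ω i ∈ Good} with hE
  -- E ⊆ T
  have hsub : E ⊆ T := by
    intro ω hω
    choose A B h0 hAB hf1e hf2e using fun i => bag_lt (ω i) (hω i).1 (hω i).2.1 (hω i).2.2
    constructor
    · intro i
      rw [hf1e i, hf2e i]
      exact ENNReal.ofReal_le_ofReal (hAB i).le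
    · intro g hg hmin
      rcases hg with hg | hg
      · exact hg
      · exfalso
        rw [Set.mem_singleton_iff] at hg
        subst hg
        have hle := hmin f1 (Set.mem_insert _ _)
        have hA : ∑ i, ellLOG f1 (ω i) = ENNReal.ofReal (∑ i, A i) := by
          rw [ENNReal.ofReal_sum_of_nonneg (fun i _ => h0 i)]
          exact Finset.sum_congr rfl fun i _ => hf1e i
        have hB : ∑ i, ellLOG f2 (ω i) = ENNReal.ofReal (∑ i, B i) := by
          rw [ENNReal.ofReal_sum_of_nonneg (fun i _ => (h0 i).trans (hAB i).le)]
          exact Finset.sum_congr rfl fun i _ => hf2e i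
        rw [hA, hB] at hle
        have hsum : ∑ i, A i < ∑ i, B i :=
          Finset.sum_lt_sum_of_nonempty Finset.univ_nonempty (fun i _ => hAB i)
        have h0sum : 0 ≤ ∑ i, A i := Finset.sum_nonneg fun i _ => h0 i
        have := (ENNReal.ofReal_lt_ofReal_iff (by linarith)).mpr hsum
        exact absurd hle (not_le.mpr this)
  -- complement bound
  have hGoodc : Goodᶜ ⊆ {bag : Bag k | labelProp bag ≤ 1/2}
      ∪ {bag : Bag k | predProp f1 bag ≤ 1/2} ∪ {bag : Bag k | ∀ j, (bag j).1 = 0} := by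
    intro bag hbag
    rw [hGood] at hbag
    simp only [Set.mem_compl_iff, Set.mem_setOf_eq, not_and_or, not_lt, not_exists] at hbag
    rcases hbag with h | h | h
    · exact Or.inl (Or.inl h)
    · exact Or.inl (Or.inr h)
    · refine Or.inr fun j => ?_
      have := h j
      omega
  have hmukG : (muk k Goodᶜ).toReal ≤ 2 * (17/18:ℝ)^k + (2/3:ℝ)^k := by
    have h1 : muk k Goodᶜ ≤ muk k {bag : Bag k | labelProp bag ≤ 1/2}
        + muk k {bag : Bag k | predProp f1 bag ≤ 1/2}
        + muk k {bag : Bag k | ∀ j, (bag j).1 = 0} := by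
      calc muk k Goodᶜ ≤ muk k ({bag : Bag k | labelProp bag ≤ 1/2}
          ∪ {bag : Bag k | predProp f1 bag ≤ 1/2} ∪ {bag : Bag k | ∀ j, (bag j).1 = 0}) :=
            measure_mono hGoodc
        _ ≤ _ := le_trans (measure_union_le _ _)
            (add_le_add_left (measure_union_le _ _) _)
    have h2 := ENNReal.toReal_mono (by finiteness) h1
    rw [ENNReal.toReal_add (by finiteness) (by finiteness),
      ENNReal.toReal_add (by finiteness) (by finiteness)] at h2
    have := @badS_bound k
    have := @badA_bound k
    have := @badC_bound k
    linarith
  have hEc : (μ Eᶜ).toReal ≤ (n:ℝ) * (2 * (17/18:ℝ)^k + (2/3:ℝ)^k) := by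
    have hEcEq : Eᶜ = ⋃ i, Function.eval i ⁻¹' Goodᶜ := by
      ext ω
      simp [hE, Function.eval]
    have h1 : μ Eᶜ ≤ ∑ i : Fin n, muk k Goodᶜ := by
      rw [hEcEq]
      refine le_trans (measure_iUnion_le _) ?_
      rw [tsum_fintype]
      exact Finset.sum_le_sum fun i _ => le_of_eq (bagMeasure_eval i _)
    have h2 := ENNReal.toReal_mono (ENNReal.sum_ne_top.mpr fun i _ => measure_ne_top _ _) h1
    refine le_trans h2 ?_
    rw [ENNReal.toReal_sum (fun i _ => by finiteness), Finset.sum_const, Finset.card_univ,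
      Fintype.card_fin, nsmul_eq_mul]
    exact mul_le_mul_of_nonneg_left hmukG (by positivity)
  have hEcδ : (μ Eᶜ).toReal ≤ δ := le_trans hEc (numeric k n δ hδ0 hδ1 hn hk)
  have hEm : MeasurableSet E := E.to_countable.measurableSet
  have hsplit : (μ E).toReal + (μ Eᶜ).toReal = 1 := by
    rw [← ENNReal.toReal_add (by finiteness) (by finiteness), measure_add_measure_compl hEm]
    simp
  have hfinal : (μ E).toReal ≤ (μ T).toReal :=
    ENNReal.toReal_mono (measure_ne_top μ T) (measure_mono hsub)
  linarith
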